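/- arXiv:2208.09731 — 9 statements merged into one kernel-verified Lean document; each statement's English description precedes it below -/
import Mathlib

section
/- Let G be a directed graph on vertex set V, A a matrix over a field F whose off-diagonal support pattern matches the edges of G, and Z a zero forcing set of G. If x is in the kernel of A and x restricted to Z is the zero vector, then x = 0. -/
open Matrix

section ZeroForcing

variable {V : Type*}

/-- The blue-coloring closure of the zero forcing process on a directed graph with
edge relation `E`, starting from the initially blue set `Z`:  a blue vertex `u` all of
whose out-neighbors except `v` are already blue forces `v` to become blue. -/
inductive Blue (E : V → V → Prop) (Z : Set V) : V → Prop
  | init {v : V} : v ∈ Z → Blue E Z v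
  | force {u v : V} : Blue E Z u → E u v →
      (∀ w, E u w → w ≠ v → Blue E Z w) → Blue E Z v

/-- `Z` is a zero forcing set if the forcing process colors every vertex blue. -/
def IsZeroForcingSet (E : V → V → Prop) (Z : Set V) : Prop := ∀ v, Blue E Z v

end ZeroForcing

section ForcingAlg

variable {F : Type*} [Field F] {n : ℕ}

/-- The off-diagonal adjacency pattern of a matrix: `u → v` iff `u ≠ v` and `A u v ≠ 0`. -/
def adjOf (A : Matrix (Fin n) (Fin n) F) (u v : Fin n) : Prop := u ≠ v ∧ A u v ≠ 0

/-- A chronological list of forces for the zero forcing set `Z` of `A`:  `π` lists the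
vertices outside `Z` in the order they are forced, and `par u` is the forcing parent of
`u` (the vertex that forces `u`). -/
structure ForcingOrder (A : Matrix (Fin n) (Fin n) F) (Z : Finset (Fin n)) where
  π : List (Fin n)
  par : Fin n → Fin n
  nodup : π.Nodup
  mem_iff : ∀ v, v ∈ π ↔ v ∉ Z
  par_ne_self : ∀ u ∈ π, par u ≠ u
  par_edge : ∀ u ∈ π, A (par u) u ≠ 0
  par_blue : ∀ u ∈ π, par u ∈ Z ∨ (par u ∈ π ∧ π.idxOf (par u) < π.idxOf u)
  others_blue : ∀ u ∈ π, ∀ w, w ≠ par u → w ≠ u → A (par u) w ≠ 0 →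
      (w ∈ Z ∨ (w ∈ π ∧ π.idxOf w < π.idxOf u))
  par_inj : ∀ u ∈ π, ∀ v ∈ π, par u = par v → u = v

/-- One step of the forcing algorithm: `x_u ← (b_{u↑} − A_{u↑,*} x) / A_{u↑,u}`. -/
def forcingStep (A : Matrix (Fin n) (Fin n) F) (par : Fin n → Fin n)
    (b : Fin n → F) (x : Fin n → F) (u : Fin n) : Fin n → F :=
  Function.update x u ((b (par u) - A (par u) ⬝ᵥ x) / A (par u) u)

/-- The forcing algorithm `Forcing(A, Z, b)`: starting from `x = 0`, iterate the forcing
update over the vertices outside `Z` in forcing order. -/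
def Forcing (A : Matrix (Fin n) (Fin n) F) {Z : Finset (Fin n)}
    (fo : ForcingOrder A Z) (b : Fin n → F) : Fin n → F :=
  fo.π.foldl (forcingStep A fo.par b) 0

/-- The map `R(b) = b − A · Forcing(A, Z, b)`. -/
def Rmap (A : Matrix (Fin n) (Fin n) F) {Z : Finset (Fin n)}
    (fo : ForcingOrder A Z) (b : Fin n → F) : Fin n → F :=
  b - A.mulVec (Forcing A fo b)

/-- A vertex is a terminal if it has no forcing child. -/
def IsTerminal {A : Matrix (Fin n) (Fin n) F} {Z : Finset (Fin n)}
    (fo : ForcingOrder A Z) (v : Fin n) : Prop :=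
  ∀ u ∈ fo.π, fo.par u ≠ v

instance {A : Matrix (Fin n) (Fin n) F} {Z : Finset (Fin n)} (fo : ForcingOrder A Z) :
    DecidablePred (IsTerminal fo) := fun v =>
  decidable_of_iff (∀ u ∈ fo.π, fo.par u ≠ v) Iff.rfl

/-- The core matrix `B = (R A)_{T,Z}`: its column indexed by `z ∈ Z` is `(R a_z)_T`,
where `a_z` is the `z`-th column of `A` and `T` is the terminal set. -/
def coreMatrix (A : Matrix (Fin n) (Fin n) F) {Z : Finset (Fin n)}
    (fo : ForcingOrder A Z) :
    Matrix {v // IsTerminal fo v} {v // v ∈ Z} F :=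
  Matrix.of fun t z => Rmap A fo (fun i => A i z.1) t.1

end ForcingAlg

/-- If `A`'s off-diagonal support matches the edges of `G`, `Z` is a zero
forcing set of `G`, `x ∈ ker A` and `x` vanishes on `Z`, then `x = 0`. -/
theorem stmt0 {V : Type*} [Fintype V] [DecidableEq V] {F : Type*} [Field F]
    (E : V → V → Prop) (A : Matrix V V F)
    (hA : ∀ u v : V, u ≠ v → (A u v ≠ 0 ↔ E u v))
    (Z : Set V) (hZ : IsZeroForcingSet E Z)
    (x : V → F) (hker : A.mulVec x = 0) (hxZ : ∀ v ∈ Z, x v = 0) :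
    x = 0 := by
  funext v
  show x v = 0
  have key : ∀ v, Blue E Z v → x v = 0 := by
    intro v hv
    induction hv with
    | init h => exact hxZ _ h
    | @force u v hu hE hw ihu ihw =>
      rcases eq_or_ne u v with rfl | hne
      · exact ihu
      have hsum : ∑ w, A u w * x w = 0 := congrFun hker u
      have hAv : A u v ≠ 0 := (hA u v hne).mpr hE
      have hz : ∀ w, w ≠ v → A u w * x w = 0 := by
        intro w hwv
        rcases eq_or_ne w u with rfl | hwu
        · simp [ihu]
        rcases eq_or_ne (A u w) 0 with h0 | h0
        · simp [h0]
        · have : E u w := (hA u w (Ne.symm hwu)).mp h0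
          simp [ihw w this hwv]
      have : A u v * x v = 0 := by
        rwa [Fintype.sum_eq_single v hz] at hsum
      exact (mul_eq_zero.mp this).resolve_left hAv
  exact key v (hZ v)
end

section
/- Let Z be a zero forcing set of a matrix A ∈ F^{n×n} over a field F. Then the columns of A indexed by vertices not in Z are linearly independent. -/
open Matrix

lemma blue_zero {F : Type*} [Field F] {n : ℕ} (A : Matrix (Fin n) (Fin n) F)
    (Z : Set (Fin n)) (x : Fin n → F) (hx : A.mulVec x = 0)
    (hZ : ∀ v ∈ Z, x v = 0) : ∀ v, Blue (adjOf A) Z v → x v = 0 := by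
  intro v hv
  induction hv with
  | init h => exact hZ _ h
  | @force u v hu he hothers ihu ihw =>
    have hrow := congrFun hx u
    simp only [Matrix.mulVec, dotProduct, Pi.zero_apply] at hrow
    have hsum : ∑ i, A u i * x i = A u v * x v := by
      apply Finset.sum_eq_single_of_mem v (Finset.mem_univ v)
      intro i _ hi
      by_cases hiu : i = u
      · rw [hiu, ihu, mul_zero]
      · by_cases hAi : A u i = 0
        · rw [hAi, zero_mul]
        · rw [ihw i ⟨Ne.symm hiu, hAi⟩ hi, mul_zero]
    rw [hsum] at hrow
    exact (mul_eq_zero.mp hrow).resolve_left he.2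

/-- if `Z` is a zero forcing set of `A`, the columns of `A` indexed by
vertices outside `Z` are linearly independent. -/
theorem stmt1 {F : Type*} [Field F] {n : ℕ} (A : Matrix (Fin n) (Fin n) F)
    (Z : Finset (Fin n)) (hZ : IsZeroForcingSet (adjOf A) ↑Z) :
    LinearIndependent F (fun v : {v : Fin n // v ∉ Z} => (fun i => A i v.1)) := by
  rw [Fintype.linearIndependent_iff]
  intro g hg v
  set x : Fin n → F := fun i => if h : i ∈ Z then 0 else g ⟨i, h⟩ with hxdef
  have hx : A.mulVec x = 0 := by
    funext j
    have h0 := congrFun hg j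
    simp only [Finset.sum_apply, Pi.smul_apply, smul_eq_mul, Pi.zero_apply] at h0
    simp only [Matrix.mulVec, dotProduct]
    calc ∑ i, A j i * x i = ∑ i ∈ Zᶜ, A j i * x i := by
          refine (Finset.sum_subset (Finset.subset_univ _) ?_).symm
          intro i _ hi
          simp only [Finset.mem_compl, not_not] at hi
          simp [hxdef, hi]
      _ = ∑ v : {v : Fin n // v ∉ Z}, g v * A j v.1 := by
          rw [Finset.sum_subtype Zᶜ (fun i => Finset.mem_compl)]
          refine Finset.sum_congr rfl fun i _ => ?_
          simp [hxdef, i.2, mul_comm]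
      _ = 0 := h0
  have hzero : x v.1 = 0 :=
    blue_zero A ↑Z x hx (fun w hw => by simp [hxdef, Finset.mem_coe.mp hw]) v.1 (hZ v.1)
  simpa [hxdef, v.2] using hzero
end

section
/- Let Z be a zero forcing set of a matrix A ∈ F^{n×n} and b ∈ F^n. If Ax = b, Ay = b, and x and y agree on all coordinates in Z, then x = y. -/
open Matrix

/-- solutions of `A x = b` agreeing on a zero forcing set `Z` coincide. -/
theorem stmt2 {F : Type*} [Field F] {n : ℕ} (A : Matrix (Fin n) (Fin n) F)
    (Z : Finset (Fin n)) (hZ : IsZeroForcingSet (adjOf A) ↑Z)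
    (b x y : Fin n → F) (hx : A.mulVec x = b) (hy : A.mulVec y = b)
    (hagree : ∀ i ∈ Z, x i = y i) :
    x = y := by
  have hd : A.mulVec (x - y) = 0 := by
    rw [Matrix.mulVec_sub, hx, hy, sub_self]
  have key : ∀ v, Blue (adjOf A) ↑Z v → x v = y v := by
    intro v hv
    induction hv with
    | init h => exact hagree _ h
    | @force u v hu huv hall ihu ihall =>
      have h0 : ∑ w, A u w * (x w - y w) = 0 := by
        have := congrFun hd u
        simpa [Matrix.mulVec, dotProduct] using this
      have hsingle : ∑ w, A u w * (x w - y w) = A u v * (x v - y v) := by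
        apply Finset.sum_eq_single
        · intro w _ hwv
          by_cases hA : A u w = 0
          · simp [hA]
          · by_cases hwu : w = u
            · subst hwu; simp [ihu]
            · have : Blue (adjOf A) ↑Z w := hall w ⟨fun h => hwu h.symm, hA⟩ hwv
              simp [ihall w ⟨fun h => hwu h.symm, hA⟩ hwv]
        · intro h; exact absurd (Finset.mem_univ v) h
      have hAuv : A u v ≠ 0 := huv.2
      have : A u v * (x v - y v) = 0 := by rw [← hsingle]; exact h0
      have := (mul_eq_zero.mp this).resolve_left hAuv
      exact sub_eq_zero.mp this
  funext i
  exact key i (hZ i)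
end

section
/- Let Z be a zero forcing set of A ∈ F^{n×n} with forcing order π, in which each vertex u outside Z is forced by a unique forcing parent u↑. Define the Forcing algorithm: initialize x = 0; for each u ∈ V∖Z in forcing order, set x_u ← (b_{u↑} − A_{u↑,*} x) / A_{u↑,u}. Then after x_u is updated, for every vertex v with v ≤_π u we have A_{v↑,*} x = b_{v↑}. In particular, if Ax = b has a solution x with x_Z = 0, then the Forcing algorithm with input b computes that solution. -/
open Matrix

lemma dot_update {F : Type*} [Field F] {n : ℕ} (r y : Fin n → F) (u : Fin n) (c : F) :
    r ⬝ᵥ Function.update y u c = r ⬝ᵥ y + r u * (c - y u) := by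
  have h : ∀ w : Fin n, r w * Function.update y u c w =
      r w * y w + (if w = u then r u * (c - y u) else 0) := by
    intro w
    by_cases hw : w = u
    · subst hw; simp [Function.update]; ring
    · simp [Function.update, hw]
  simp only [dotProduct, h, Finset.sum_add_distrib, Finset.sum_ite_eq', Finset.mem_univ, if_pos]

lemma mem_take_of_indexOf_lt {α : Type*} [DecidableEq α] {l : List α} {v : α} {k : ℕ}
    (hv : v ∈ l) (h : l.idxOf v < k) : v ∈ l.take k := by
  rw [List.mem_take_iff_getElem]
  exact ⟨l.idxOf v, by have := List.idxOf_lt_length_iff.2 hv; omega,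
    List.getElem_idxOf (List.idxOf_lt_length_iff.2 hv)⟩

lemma indexOf_lt_of_mem_take {α : Type*} [DecidableEq α] {l : List α} (hl : l.Nodup)
    {v : α} {k : ℕ} (h : v ∈ l.take k) : l.idxOf v < k := by
  rw [List.mem_take_iff_getElem] at h
  obtain ⟨i, hi, rfl⟩ := h
  rw [List.Nodup.idxOf_getElem hl]; omega

lemma inv1 {F : Type*} [Field F] {n : ℕ} (A : Matrix (Fin n) (Fin n) F)
    (Z : Finset (Fin n)) (fo : ForcingOrder A Z) (b : Fin n → F) (k : ℕ) :
    (∀ w, w ∉ fo.π.take k → (fo.π.take k).foldl (forcingStep A fo.par b) 0 w = 0) ∧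
    (∀ v ∈ fo.π.take k,
      A (fo.par v) ⬝ᵥ (fo.π.take k).foldl (forcingStep A fo.par b) 0 = b (fo.par v)) := by
  induction k with
  | zero => simp
  | succ k ih =>
    by_cases hk : k < fo.π.length
    · obtain ⟨ih0, ih1⟩ := ih
      set u := fo.π[k] with hu_def
      have hu : u ∈ fo.π := List.getElem_mem _
      have hidx : fo.π.idxOf u = k := List.Nodup.idxOf_getElem fo.nodup k hk
      have hunot : u ∉ fo.π.take k := fun hmem => by
        have := indexOf_lt_of_mem_take fo.nodup hmem; omega
      have hstep : fo.π.take (k+1) = fo.π.take k ++ [u] := by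
        rw [List.take_succ, List.getElem?_eq_getElem hk]; rfl
      set xk := (fo.π.take k).foldl (forcingStep A fo.par b) 0 with hxk
      have hfold : (fo.π.take (k+1)).foldl (forcingStep A fo.par b) 0
          = forcingStep A fo.par b xk u := by
        rw [hstep, List.foldl_append]; rfl
      have hxku : xk u = 0 := ih0 u hunot
      set c := (b (fo.par u) - A (fo.par u) ⬝ᵥ xk) / A (fo.par u) u with hc
      have hAu : A (fo.par u) u ≠ 0 := fo.par_edge u hu
      constructor
      · intro w hw
        rw [hstep] at hw
        simp only [List.mem_append, List.mem_singleton, not_or] at hw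
        rw [hfold]
        simp only [forcingStep, Function.update]
        rw [dif_neg hw.2]
        exact ih0 w hw.1
      · intro v hv
        rw [hstep, List.mem_append, List.mem_singleton] at hv
        rw [hfold]
        simp only [forcingStep]
        rw [dot_update, hxku, sub_zero]
        rcases hv with hv | rfl
        · have hvmem : v ∈ fo.π := List.mem_of_mem_take hv
          have hvidx : fo.π.idxOf v < k := indexOf_lt_of_mem_take fo.nodup hv
          have hApvu : A (fo.par v) u = 0 := by
            by_contra h0
            have hvne : v ≠ u := fun h => hunot (h ▸ hv)
            by_cases hpar : u = fo.par v
            · rcases fo.par_blue v hvmem with hZ' | ⟨_, hlt⟩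
              · exact (fo.mem_iff u).1 hu (hpar ▸ hZ')
              · rw [← hpar, hidx] at hlt; omega
            · rcases fo.others_blue v hvmem u hpar (Ne.symm hvne) h0 with hZ' | ⟨_, hlt⟩
              · exact (fo.mem_iff u).1 hu hZ'
              · rw [hidx] at hlt; omega
          rw [hApvu, zero_mul, add_zero]
          exact ih1 v hv
        · rw [mul_div_cancel₀ _ hAu]; ring
    · have h1 : fo.π.take (k+1) = fo.π.take k := by
        rw [List.take_of_length_le (by omega), List.take_of_length_le (by omega)]
      rw [h1]; exact ih

lemma inv2 {F : Type*} [Field F] {n : ℕ} (A : Matrix (Fin n) (Fin n) F)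
    (Z : Finset (Fin n)) (fo : ForcingOrder A Z) (b : Fin n → F) (x : Fin n → F)
    (hx : A.mulVec x = b) (hxZ : ∀ i ∈ Z, x i = 0) (k : ℕ) :
    ∀ w, (fo.π.take k).foldl (forcingStep A fo.par b) 0 w
      = if w ∈ fo.π.take k then x w else 0 := by
  induction k with
  | zero => simp
  | succ k ih =>
    by_cases hk : k < fo.π.length
    · set u := fo.π[k] with hu_def
      have hu : u ∈ fo.π := List.getElem_mem _
      have hidx : fo.π.idxOf u = k := List.Nodup.idxOf_getElem fo.nodup k hk
      have hunot : u ∉ fo.π.take k := fun hmem => by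
        have := indexOf_lt_of_mem_take fo.nodup hmem; omega
      have hstep : fo.π.take (k+1) = fo.π.take k ++ [u] := by
        rw [List.take_succ, List.getElem?_eq_getElem hk]; rfl
      set xk := (fo.π.take k).foldl (forcingStep A fo.par b) 0 with hxk
      have hfold : (fo.π.take (k+1)).foldl (forcingStep A fo.par b) 0
          = forcingStep A fo.par b xk u := by
        rw [hstep, List.foldl_append]; rfl
      have hAu : A (fo.par u) u ≠ 0 := fo.par_edge u hu
      have hb : b (fo.par u) = A (fo.par u) ⬝ᵥ x := (congrFun hx (fo.par u)).symm
      have hkey : b (fo.par u) - A (fo.par u) ⬝ᵥ xk = A (fo.par u) u * x u := by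
        rw [hb]
        have : A (fo.par u) ⬝ᵥ x - A (fo.par u) ⬝ᵥ xk
            = ∑ w, A (fo.par u) w * (x w - xk w) := by
          simp [dotProduct, Finset.sum_sub_distrib, mul_sub]
        rw [this]
        rw [Finset.sum_eq_single u]
        · rw [ih u, if_neg hunot, sub_zero]
        · intro w _ hwne
          rw [ih w]
          by_cases hwt : w ∈ fo.π.take k
          · simp [hwt]
          · rw [if_neg hwt, sub_zero]
            by_cases hA : A (fo.par u) w = 0
            · rw [hA, zero_mul]
            · have hxw : x w = 0 := by
                by_cases hpar : w = fo.par u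
                · rcases fo.par_blue u hu with hZ' | ⟨hmem, hlt⟩
                  · exact hpar ▸ hxZ _ hZ'
                  · rw [hidx] at hlt
                    exact absurd (hpar ▸ mem_take_of_indexOf_lt hmem hlt) hwt
                · rcases fo.others_blue u hu w hpar hwne hA with hZ' | ⟨hmem, hlt⟩
                  · exact hxZ _ hZ'
                  · rw [hidx] at hlt
                    exact absurd (mem_take_of_indexOf_lt hmem hlt) hwt
              rw [hxw, mul_zero]
        · intro h; exact absurd (Finset.mem_univ u) h
      have hc : (b (fo.par u) - A (fo.par u) ⬝ᵥ xk) / A (fo.par u) u = x u := by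
        rw [hkey, mul_div_cancel_left₀ _ hAu]
      intro w
      rw [hfold]
      simp only [forcingStep, hc]
      by_cases hw : w = u
      · subst hw
        rw [Function.update_self, hstep, if_pos (by simp)]
      · rw [Function.update_of_ne hw, ih w, hstep]
        simp only [List.mem_append, List.mem_singleton, hw, or_false]
    · have h1 : fo.π.take (k+1) = fo.π.take k := by
        rw [List.take_of_length_le (by omega), List.take_of_length_le (by omega)]
      rw [h1]; exact ih

/-- in the forcing algorithm, after `x_u` has been updated (i.e. after
processing any prefix of the forcing order `π`), every vertex `v` processed so far
satisfies `A_{v↑,*} x = b_{v↑}`.  In particular if `A x = b` has a solution with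
`x_Z = 0`, then `Forcing(A, Z, b)` computes that solution. -/
theorem stmt3 {F : Type*} [Field F] {n : ℕ} (A : Matrix (Fin n) (Fin n) F)
    (Z : Finset (Fin n)) (hZ : IsZeroForcingSet (adjOf A) ↑Z)
    (fo : ForcingOrder A Z) (b : Fin n → F) :
    (∀ k : ℕ, ∀ v ∈ fo.π.take k,
        A (fo.par v) ⬝ᵥ ((fo.π.take k).foldl (forcingStep A fo.par b) 0)
          = b (fo.par v)) ∧
    (∀ x : Fin n → F, A.mulVec x = b → (∀ i ∈ Z, x i = 0) → Forcing A fo b = x) := by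
  constructor
  · intro k v hv
    exact (inv1 A Z fo b k).2 v hv
  · intro x hx hxZ
    funext w
    have h := inv2 A Z fo b x hx hxZ fo.π.length w
    rw [List.take_length] at h
    show fo.π.foldl (forcingStep A fo.par b) 0 w = x w
    rw [h]
    by_cases hw : w ∈ fo.π
    · rw [if_pos hw]
    · rw [if_neg hw]
      have : w ∈ Z := by
        by_contra hZ'
        exact hw ((fo.mem_iff w).2 hZ')
      exact (hxZ w this).symm
end

section
/- Fix A ∈ F^{n×n}, a zero forcing set Z of A, and a forcing order. Define L : F^n → F^n by L(b) = Forcing(A, Z, b). Then L is a linear map. -/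
open Matrix

section LinAux

variable {F : Type*} [Field F] {n : ℕ}

lemma foldl_add (A : Matrix (Fin n) (Fin n) F) (par : Fin n → Fin n)
    (b b' : Fin n → F) :
    ∀ (l : List (Fin n)) (x x' : Fin n → F),
      l.foldl (forcingStep A par (b + b')) (x + x') =
        l.foldl (forcingStep A par b) x + l.foldl (forcingStep A par b') x' := by
  intro l
  induction l with
  | nil => intro x x'; simp
  | cons u l ih =>
    intro x x'
    simp only [List.foldl_cons]
    rw [← ih]
    congr 1
    funext w
    simp only [forcingStep, Function.update, Pi.add_apply]
    by_cases hw : w = u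
    · subst hw
      simp only [dite_true]
      rw [dotProduct_add, ← add_div]
      ring_nf
    · simp [dif_neg hw]

lemma foldl_smul (A : Matrix (Fin n) (Fin n) F) (par : Fin n → Fin n)
    (c : F) (b : Fin n → F) :
    ∀ (l : List (Fin n)) (x : Fin n → F),
      l.foldl (forcingStep A par (c • b)) (c • x) =
        c • l.foldl (forcingStep A par b) x := by
  intro l
  induction l with
  | nil => intro x; simp
  | cons u l ih =>
    intro x
    simp only [List.foldl_cons]
    rw [← ih]
    congr 1
    funext w
    simp only [forcingStep, Function.update, Pi.smul_apply]
    by_cases hw : w = u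
    · subst hw
      simp only [dite_true, smul_eq_mul]
      rw [dotProduct_smul, smul_eq_mul, ← mul_sub, mul_div_assoc]
    · simp [dif_neg hw]

end LinAux

/-- `L(b) = Forcing(A, Z, b)` is a linear map. -/
theorem stmt5 {F : Type*} [Field F] {n : ℕ} (A : Matrix (Fin n) (Fin n) F)
    (Z : Finset (Fin n)) (hZ : IsZeroForcingSet (adjOf A) ↑Z)
    (fo : ForcingOrder A Z) :
    IsLinearMap F (fun b => Forcing A fo b) := by
  constructor
  · intro b b'
    have := foldl_add A fo.par b b' fo.π 0 0
    simpa [Forcing] using this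
  · intro c b
    have := foldl_smul A fo.par c b fo.π 0
    simpa [Forcing] using this
end

section
/- Fix A ∈ F^{n×n}, a zero forcing set Z of A, and a forcing order. Define R : F^n → F^n by R(b) = b − A·Forcing(A,Z,b). Then R is a linear map, and moreover for every column a_v = A_{*,v} of A with v ∉ Z, we have R(a_v) = 0. -/
open Matrix

section Lemmas
variable {F : Type*} [Field F] {n : ℕ}

lemma foldl_step_add (A : Matrix (Fin n) (Fin n) F) (par : Fin n → Fin n)
    (l : List (Fin n)) : ∀ (b₁ b₂ x₁ x₂ : Fin n → F),
    l.foldl (forcingStep A par (b₁ + b₂)) (x₁ + x₂) =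
      l.foldl (forcingStep A par b₁) x₁ + l.foldl (forcingStep A par b₂) x₂ := by
  induction l with
  | nil => intro _ _ _ _; rfl
  | cons u t ih =>
    intro b₁ b₂ x₁ x₂
    simp only [List.foldl_cons]
    rw [show forcingStep A par (b₁ + b₂) (x₁ + x₂) u =
        forcingStep A par b₁ x₁ u + forcingStep A par b₂ x₂ u from ?_, ih]
    funext w
    by_cases hw : w = u
    · subst hw
      simp only [forcingStep, Function.update_self, Pi.add_apply, dotProduct_add]
      ring
    · simp [forcingStep, Function.update_of_ne hw]

lemma foldl_step_smul (A : Matrix (Fin n) (Fin n) F) (par : Fin n → Fin n)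
    (l : List (Fin n)) : ∀ (c : F) (b x : Fin n → F),
    l.foldl (forcingStep A par (c • b)) (c • x) =
      c • l.foldl (forcingStep A par b) x := by
  induction l with
  | nil => intro _ _ _; rfl
  | cons u t ih =>
    intro c b x
    simp only [List.foldl_cons]
    rw [show forcingStep A par (c • b) (c • x) u = c • forcingStep A par b x u from ?_, ih]
    funext w
    by_cases hw : w = u
    · subst hw
      simp only [forcingStep, Function.update_self, Pi.smul_apply, dotProduct_smul,
        smul_eq_mul]
      ring
    · simp [forcingStep, Function.update_of_ne hw]

end Lemmas

/-- `R(b) = b − A·Forcing(A,Z,b)` is a linear map, and `R a_v = 0` for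
every column `a_v` of `A` with `v ∉ Z`. -/
theorem stmt6 {F : Type*} [Field F] {n : ℕ} (A : Matrix (Fin n) (Fin n) F)
    (Z : Finset (Fin n)) (hZ : IsZeroForcingSet (adjOf A) ↑Z)
    (fo : ForcingOrder A Z) :
    IsLinearMap F (fun b => Rmap A fo b) ∧
    ∀ v ∉ Z, Rmap A fo (fun i => A i v) = 0 := by
  constructor
  · constructor
    · intro b₁ b₂
      have h := foldl_step_add A fo.par fo.π b₁ b₂ 0 0
      rw [add_zero] at h
      simp only [Rmap, Forcing, h, Matrix.mulVec_add]
      abel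
    · intro c b
      have h := foldl_step_smul A fo.par fo.π c b 0
      rw [smul_zero] at h
      simp only [Rmap, Forcing, h, Matrix.mulVec_smul]
      funext i
      simp [mul_sub]
  · intro v hv
    have hvπ : v ∈ fo.π := (fo.mem_iff v).2 hv
    have key : ∀ l P, fo.π = P ++ l →
        l.foldl (forcingStep A fo.par (fun i => A i v))
          (if v ∈ P then Pi.single v 1 else 0) =
        (if v ∈ P ++ l then Pi.single v (1:F) else 0) := by
      intro l
      induction l with
      | nil => intro P h; simp
      | cons u t ih =>
        intro P hP
        have huπ : u ∈ fo.π := by rw [hP]; simp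
        have hnd := fo.nodup
        rw [hP] at hnd
        have hdisj := (List.nodup_append.mp hnd).2.2
        have huP : u ∉ P := fun h => hdisj u h u List.mem_cons_self rfl
        -- index lemma: forced-earlier vertices are in P
        have hidx : ∀ w, w ∈ fo.π → fo.π.idxOf w < fo.π.idxOf u → w ∈ P := by
          intro w hwπ hlt
          by_contra hwP
          rw [hP] at hlt
          rw [List.idxOf_append_of_notMem huP, List.idxOf_append_of_notMem hwP] at hlt
          simp only [List.idxOf_cons_self, add_zero] at hlt
          omega
        have hstep : forcingStep A fo.par (fun i => A i v)
            (if v ∈ P then Pi.single v 1 else 0) u =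
            (if v ∈ P ++ [u] then Pi.single v (1:F) else 0) := by
          by_cases huv : u = v
          · subst huv
            have hvP : u ∉ P := huP
            rw [if_neg hvP, if_pos (by simp)]
            funext w
            by_cases hw : w = u
            · subst hw
              simp [forcingStep, div_self (fo.par_edge w huπ)]
            · simp [forcingStep, Function.update_of_ne hw, Pi.single_eq_of_ne hw]
          · by_cases hvP : v ∈ P
            · rw [if_pos hvP, if_pos (by simp [hvP])]
              funext w
              by_cases hw : w = u
              · subst hw
                simp [forcingStep, dotProduct_single, Pi.single_eq_of_ne huv,
                  Ne.symm huv]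
              · simp [forcingStep, Function.update_of_ne hw]
            · rw [if_neg hvP, if_neg (by simp [hvP, Ne.symm huv])]
              have hAv : A (fo.par u) v = 0 := by
                by_contra hA
                have hvpar : v ≠ fo.par u := by
                  intro h
                  rcases fo.par_blue u huπ with h1 | h1
                  · exact hv (h ▸ h1)
                  · exact hvP (hidx v hvπ (h ▸ h1.2))
                rcases fo.others_blue u huπ v hvpar (Ne.symm huv) hA with h1 | h1
                · exact hv h1
                · exact hvP (hidx v hvπ h1.2)
              funext w
              by_cases hw : w = u
              · subst hw
                simp [forcingStep, hAv]
              · simp [forcingStep, Function.update_of_ne hw]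
        calc (u :: t).foldl (forcingStep A fo.par fun i => A i v)
              (if v ∈ P then Pi.single v 1 else 0)
            = t.foldl (forcingStep A fo.par fun i => A i v)
              (if v ∈ P ++ [u] then Pi.single v 1 else 0) := by
              rw [List.foldl_cons, hstep]
          _ = _ := by
              rw [ih (P ++ [u]) (by simpa using hP)]
              simp
    have hF : Forcing A fo (fun i => A i v) = Pi.single v 1 := by
      have := key fo.π [] rfl
      simpa [Forcing, hvπ] using this
    funext i
    simp [Rmap, hF, Matrix.mulVec_single]
end

section
/- Fix A ∈ F^{n×n}, zero forcing set Z of size k, and define R(b) = b − A·Forcing(A,Z,b) and L(b) = Forcing(A,Z,b). Then for all b ∈ F^n, the support of R(b) is contained in the terminal set T, and the support of L(b) is contained in V∖Z. -/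
open Matrix

section Aux

variable {F : Type*} [Field F] {n : ℕ}

lemma foldl_forcingStep_of_not_mem (A : Matrix (Fin n) (Fin n) F) (par : Fin n → Fin n)
    (b : Fin n → F) (l : List (Fin n)) (x : Fin n → F) (v : Fin n) (hv : v ∉ l) :
    l.foldl (forcingStep A par b) x v = x v := by
  induction l generalizing x with
  | nil => rfl
  | cons u l ih =>
    simp only [List.mem_cons, not_or] at hv
    rw [List.foldl_cons, ih _ hv.2, forcingStep, Function.update_of_ne hv.1]

end Aux

/-- for every `b`, `supp(R(b))` is contained in the terminal set `T`
and `supp(L(b))` is contained in `V ∖ Z`. -/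
theorem stmt7 {F : Type*} [Field F] {n : ℕ} (A : Matrix (Fin n) (Fin n) F)
    (Z : Finset (Fin n)) (hZ : IsZeroForcingSet (adjOf A) ↑Z)
    (fo : ForcingOrder A Z) (b : Fin n → F) :
    (∀ v, Rmap A fo b v ≠ 0 → IsTerminal fo v) ∧
    (∀ v, Forcing A fo b v ≠ 0 → v ∉ Z) := by
  constructor
  · intro v hv
    by_contra hterm
    apply hv
    unfold IsTerminal at hterm
    push_neg at hterm
    obtain ⟨u, hu, hpar⟩ := hterm
    obtain ⟨l1, l2, hsplit⟩ := List.append_of_mem hu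
    have hnd := fo.nodup
    rw [hsplit] at hnd
    have hul1 : u ∉ l1 := by
      have := List.disjoint_of_nodup_append hnd
      intro h; exact this h (List.mem_cons_self)
    have hul2 : u ∉ l2 := by
      have := (List.nodup_append.mp hnd).2.1
      exact (List.nodup_cons.mp this).1
    have hidx : ∀ w, w ∈ l2 → fo.π.idxOf u < fo.π.idxOf w := by
      intro w hw
      have hwl1 : w ∉ l1 := by
        have := List.disjoint_of_nodup_append hnd
        intro h; exact this h (List.mem_cons_of_mem _ hw)
      have hwu : w ≠ u := fun h => hul2 (h ▸ hw)
      rw [hsplit, List.idxOf_append_of_notMem hul1,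
        List.idxOf_append_of_notMem hwl1, List.idxOf_cons_self,
        List.idxOf_cons_ne _ hwu.symm]
      omega
    have hπl2 : ∀ w, w ∉ fo.π → w ∉ l2 := by
      intro w hw h
      exact hw (hsplit ▸ List.mem_append_right _ (List.mem_cons_of_mem _ h))
    set p := fo.par u with hp
    set x1 := l1.foldl (forcingStep A fo.par b) 0 with hx1
    set c := (b p - A p ⬝ᵥ x1) / A p u with hc
    have hx2 : Forcing A fo b = l2.foldl (forcingStep A fo.par b)
        (Function.update x1 u c) := by
      rw [Forcing, hsplit, List.foldl_append, List.foldl_cons]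
      rfl
    have hblue : ∀ w, w ∈ Z ∨ (w ∈ fo.π ∧ fo.π.idxOf w < fo.π.idxOf u) → w ∉ l2 := by
      intro w hw
      rcases hw with hw | ⟨_, hw⟩
      · exact hπl2 w (fun h => (fo.mem_iff w).mp h hw)
      · intro h; exact absurd (hidx w h) (by omega)
    have hagree : ∀ w, A p w ≠ 0 → Forcing A fo b w = Function.update x1 u c w := by
      intro w hAw
      rw [hx2]
      apply foldl_forcingStep_of_not_mem
      by_cases hwu : w = u
      · exact hwu ▸ hul2
      by_cases hwp : w = p
      · exact hwp ▸ hblue p (fo.par_blue u hu)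
      · exact hblue w (fo.others_blue u hu w hwp hwu hAw)
    have hdot : A p ⬝ᵥ Forcing A fo b = A p ⬝ᵥ Function.update x1 u c := by
      unfold dotProduct
      apply Finset.sum_congr rfl
      intro w _
      by_cases hAw : A p w = 0
      · simp [hAw]
      · rw [hagree w hAw]
    have hx1u : x1 u = 0 := by
      rw [hx1, foldl_forcingStep_of_not_mem _ _ _ _ _ _ hul1]; rfl
    have hupd : (fun w => A p w * Function.update x1 u c w)
        = Function.update (fun w => A p w * x1 w) u (A p u * c) := by
      funext w
      by_cases hwu : w = u
      · subst hwu; simp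
      · simp [Function.update_of_ne hwu]
    have hAx2 : A p ⬝ᵥ Function.update x1 u c = b p := by
      unfold dotProduct
      rw [hupd, Finset.sum_update_of_mem (Finset.mem_univ u), hc,
        mul_div_cancel₀ _ (fo.par_edge u hu)]
      have : ∑ w ∈ Finset.univ \ {u}, A p w * x1 w = A p ⬝ᵥ x1 - A p u * x1 u := by
        rw [Finset.sum_sdiff_eq_sub (Finset.singleton_subset_iff.mpr (Finset.mem_univ u))]
        simp [dotProduct]
      rw [this, hx1u]
      ring
    rw [Rmap]
    simp only [Pi.sub_apply, mulVec, ← hpar, ← hp, hdot, hAx2, sub_self]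
  · intro v hv hvZ
    apply hv
    rw [Forcing, foldl_forcingStep_of_not_mem]
    · rfl
    · exact fun h => (fo.mem_iff v).mp h hvZ
end

section
/- Let A ∈ F^{n×n} be written in block column form A = [A'_1 A'_2 A''] where A'' consists of the columns outside the zero forcing set, rank([A'_1 A'']) = rank(A), and rank(A'_1) = rank(A) − (number of columns of A''). Let M ∈ F^{k×n} be such that every column of A'' lies in ker(M) and rank(M A'_1) = rank(A'_1). Suppose Ax = b has a solution. Then for any y ∈ F^k with M A' y = M b (where A' = [A'_1 A'_2]), there exists x ∈ F^n with Ax = b whose first k coordinates equal y. -/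
open Matrix

/-- the core-lifting theorem for block matrices.  With
`A = [A₁ A₂ A'']` where `A''` has `n − k` columns, `rank [A₁ A''] = rank A`,
`rank A₁ = p` where `rank A = p + (n − k)`, and `M ∈ F^{k×n}` kills the columns of
`A''` and preserves the rank of `A₁`: if `A x = b` is solvable and `M A' y = M b`
(with `A' = [A₁ A₂]`), then some solution `x` of `A x = b` restricts to `y` on the
first `k` coordinates. -/
theorem stmt9 {F : Type*} [Field F] {n k p q : ℕ} (hk : k ≤ n) (hpq : p + q = k)
    (A1 : Matrix (Fin n) (Fin p) F) (A2 : Matrix (Fin n) (Fin q) F)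
    (A'' : Matrix (Fin n) (Fin (n - k)) F)
    (M : Matrix (Fin k) (Fin n) F) (b : Fin n → F)
    (hrank1 : (Matrix.fromCols A1 A'').rank
        = (Matrix.fromCols (Matrix.fromCols A1 A2) A'').rank)
    (hp : A1.rank = p)
    (hrank2 : (Matrix.fromCols (Matrix.fromCols A1 A2) A'').rank = p + (n - k))
    (hker : M * A'' = 0)
    (hMrank : (M * A1).rank = A1.rank)
    (hsol : ∃ x, (Matrix.fromCols (Matrix.fromCols A1 A2) A'').mulVec x = b)
    (y : Fin p ⊕ Fin q → F)
    (hy : (M * Matrix.fromCols A1 A2).mulVec y = M.mulVec b) :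
    ∃ x : (Fin p ⊕ Fin q) ⊕ Fin (n - k) → F,
      (Matrix.fromCols (Matrix.fromCols A1 A2) A'').mulVec x = b ∧
      ∀ j, x (Sum.inl j) = y j := by
  set A' := Matrix.fromCols A1 A2 with hA'
  set A := Matrix.fromCols A' A'' with hA
  -- range of [A1 A''] ⊆ range of A
  have hle : LinearMap.range (Matrix.fromCols A1 A'').mulVecLin
      ≤ LinearMap.range A.mulVecLin := by
    rintro v ⟨u, rfl⟩
    refine ⟨Sum.elim (Sum.elim (u ∘ Sum.inl) 0) (u ∘ Sum.inr), ?_⟩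
    simp only [Matrix.mulVecLin_apply, hA, hA']
    rw [← Sum.elim_comp_inl_inr u, Matrix.fromCols_mulVec_sumElim,
      Matrix.fromCols_mulVec_sumElim, Matrix.fromCols_mulVec_sumElim,
      Matrix.mulVec_zero, add_zero]
    simp
  have heq : LinearMap.range (Matrix.fromCols A1 A'').mulVecLin
      = LinearMap.range A.mulVecLin :=
    Submodule.eq_of_le_of_finrank_eq hle hrank1
  -- b - A' y ∈ range A
  obtain ⟨x0, hx0⟩ := hsol
  have hbA : b ∈ LinearMap.range A.mulVecLin := ⟨x0, hx0⟩
  have hAy : A'.mulVec y ∈ LinearMap.range A.mulVecLin := by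
    refine ⟨Sum.elim y 0, ?_⟩
    simp [hA]
  have hmem : b - A'.mulVec y ∈ LinearMap.range (Matrix.fromCols A1 A'').mulVecLin := by
    rw [heq]; exact Submodule.sub_mem _ hbA hAy
  obtain ⟨uw, huw⟩ := hmem
  rw [Matrix.mulVecLin_apply, ← Sum.elim_comp_inl_inr uw,
    Matrix.fromCols_mulVec_sumElim] at huw
  set u := uw ∘ Sum.inl
  set w := uw ∘ Sum.inr
  -- M A1 u = 0
  have hMu : (M * A1).mulVec u = 0 := by
    have h1 : M.mulVec (A1.mulVec u + A''.mulVec w) = M.mulVec (b - A'.mulVec y) := by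
      rw [huw]
    have h2 : M.mulVec (A''.mulVec w) = 0 := by
      rw [Matrix.mulVec_mulVec, hker, Matrix.zero_mulVec]
    have h3 : M.mulVec (A'.mulVec y) = M.mulVec b := by
      rw [Matrix.mulVec_mulVec]; exact hy
    rw [Matrix.mulVec_add, h2, add_zero, Matrix.mulVec_sub, h3, sub_self,
      Matrix.mulVec_mulVec] at h1
    exact h1
  -- M*A1 has trivial kernel
  have hker1 : LinearMap.ker (M * A1).mulVecLin = ⊥ := by
    have hrn := (M * A1).mulVecLin.finrank_range_add_finrank_ker
    rw [show Module.finrank F (LinearMap.range (M * A1).mulVecLin) = (M * A1).rank from rfl,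
      hMrank, hp] at hrn
    have : Module.finrank F (Fin p → F) = p := by simp
    rw [this] at hrn
    have h0 : Module.finrank F (LinearMap.ker (M * A1).mulVecLin) = 0 := by omega
    exact Submodule.finrank_eq_zero.mp h0
  have hu0 : u = 0 := by
    have : u ∈ LinearMap.ker (M * A1).mulVecLin := by
      rw [LinearMap.mem_ker, Matrix.mulVecLin_apply]; exact hMu
    rwa [hker1, Submodule.mem_bot] at this
  rw [hu0, Matrix.mulVec_zero, zero_add] at huw
  refine ⟨Sum.elim y w, ?_, fun j => rfl⟩
  rw [hA, Matrix.fromCols_mulVec_sumElim, huw]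
  ring
end

section
/- Let Z be a zero forcing set of A ∈ F^{n×n}, and let R(b) = b − A·Forcing(A,Z,b), a linear map. Let A'_1 be a set of columns of A indexed by a subset of Z such that together with the columns outside Z they form a basis-extension of full column rank spanning the column space of A (i.e., rank([A'_1 A'']) = rank(A) and rank(A'_1) = rank(A) − (n − |Z|), where A'' consists of columns outside Z). Then rank(R A'_1) = rank(A'_1). -/
open Matrix

section StmtAux

variable {F : Type*} [Field F] {n : ℕ}

lemma foldl_step_not_mem (A : Matrix (Fin n) (Fin n) F) (par : Fin n → Fin n)
    (b : Fin n → F) :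
    ∀ (l : List (Fin n)) (x : Fin n → F) (v : Fin n), v ∉ l →
      l.foldl (forcingStep A par b) x v = x v := by
  intro l
  induction l with
  | nil => intro x v _; rfl
  | cons u l ih =>
    intro x v hv
    simp only [List.mem_cons, not_or] at hv
    simp only [List.foldl_cons]
    rw [ih _ _ hv.2]
    exact Function.update_of_ne hv.1 _ _

lemma foldl_step_linear (A : Matrix (Fin n) (Fin n) F) (par : Fin n → Fin n)
    (c : F) (b1 b2 : Fin n → F) :
    ∀ (l : List (Fin n)) (x1 x2 : Fin n → F),
      l.foldl (forcingStep A par (c • b1 + b2)) (c • x1 + x2)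
        = c • l.foldl (forcingStep A par b1) x1 + l.foldl (forcingStep A par b2) x2 := by
  intro l
  induction l with
  | nil => intro x1 x2; rfl
  | cons u l ih =>
    intro x1 x2
    simp only [List.foldl_cons]
    rw [← ih]
    congr 1
    funext i
    unfold forcingStep
    rcases eq_or_ne i u with rfl | h
    · simp only [Function.update_self, Pi.add_apply, Pi.smul_apply, smul_eq_mul,
        dotProduct_add]
      have : A (par i) ⬝ᵥ (c • x1) = c * (A (par i) ⬝ᵥ x1) := by
        simp [dotProduct, Finset.mul_sum, mul_comm, mul_left_comm]
      rw [this]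
      rw [div_eq_mul_inv, div_eq_mul_inv, div_eq_mul_inv]
      ring
    · simp only [Function.update_of_ne h, Pi.add_apply, Pi.smul_apply, smul_eq_mul]

lemma Forcing_linear (A : Matrix (Fin n) (Fin n) F) {Z : Finset (Fin n)}
    (fo : ForcingOrder A Z) (c : F) (b1 b2 : Fin n → F) :
    Forcing A fo (c • b1 + b2) = c • Forcing A fo b1 + Forcing A fo b2 := by
  have h := foldl_step_linear A fo.par c b1 b2 fo.π 0 0
  simpa [Forcing] using h

lemma Forcing_zero (A : Matrix (Fin n) (Fin n) F) {Z : Finset (Fin n)}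
    (fo : ForcingOrder A Z) : Forcing A fo 0 = 0 := by
  have h := Forcing_linear A fo 1 0 0
  simp only [one_smul, add_zero] at h
  exact right_eq_add.mp h

lemma Rmap_linear (A : Matrix (Fin n) (Fin n) F) {Z : Finset (Fin n)}
    (fo : ForcingOrder A Z) (c : F) (b1 b2 : Fin n → F) :
    Rmap A fo (c • b1 + b2) = c • Rmap A fo b1 + Rmap A fo b2 := by
  unfold Rmap
  rw [Forcing_linear, Matrix.mulVec_add, Matrix.mulVec_smul]
  funext i
  simp only [Pi.sub_apply, Pi.add_apply, Pi.smul_apply, smul_eq_mul]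
  ring

lemma Rmap_zero (A : Matrix (Fin n) (Fin n) F) {Z : Finset (Fin n)}
    (fo : ForcingOrder A Z) : Rmap A fo 0 = 0 := by
  unfold Rmap
  rw [Forcing_zero, Matrix.mulVec_zero, sub_zero]

lemma Forcing_mem_Z (A : Matrix (Fin n) (Fin n) F) {Z : Finset (Fin n)}
    (fo : ForcingOrder A Z) (b : Fin n → F) (v : Fin n) (hv : v ∈ Z) :
    Forcing A fo b v = 0 := by
  have : v ∉ fo.π := fun h => (fo.mem_iff v).mp h hv
  exact foldl_step_not_mem A fo.par b fo.π 0 v this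

end StmtAux

/-- rank preservation under `R`.  If `A₁` consists of columns of `A`
indexed by `P ⊆ Z` with `rank [A₁ A''] = rank A` and `rank A₁ = rank A − (n − |Z|)`
(where `A''` consists of the columns outside `Z`), then `rank (R A₁) = rank A₁`. -/
theorem stmt10 {F : Type*} [Field F] {n : ℕ} (A : Matrix (Fin n) (Fin n) F)
    (Z : Finset (Fin n)) (hZ : IsZeroForcingSet (adjOf A) ↑Z)
    (fo : ForcingOrder A Z)
    (P : Finset (Fin n)) (hP : P ⊆ Z)
    (A1 : Matrix (Fin n) {v // v ∈ P} F) (hA1 : A1 = Matrix.of fun i p => A i p.1)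
    (A'' : Matrix (Fin n) {v : Fin n // v ∉ Z} F)
    (hA'' : A'' = Matrix.of fun i v => A i v.1)
    (hrank1 : (Matrix.fromCols A1 A'').rank = A.rank)
    (hrank2 : A1.rank + (n - Z.card) = A.rank) :
    (Matrix.of fun i (p : {v // v ∈ P}) => Rmap A fo (fun i' => A i' p.1) i).rank
      = A1.rank := by
  classical
  set S1 := LinearMap.range A1.mulVecLin with hS1
  set S2 := LinearMap.range A''.mulVecLin with hS2def
  -- cardinality of the complement subtype
  have hcard : Fintype.card {v : Fin n // v ∉ Z} = n - Z.card := by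
    rw [Fintype.card_subtype_compl, Fintype.card_coe, Fintype.card_fin]
  -- range of fromColumns is the sup
  have hrange : LinearMap.range (Matrix.fromCols A1 A'').mulVecLin = S1 ⊔ S2 := by
    apply le_antisymm
    · rintro _ ⟨v, rfl⟩
      rw [Matrix.mulVecLin_apply, ← Sum.elim_comp_inl_inr v,
        Matrix.fromCols_mulVec_sumElim]
      exact Submodule.add_mem_sup ⟨_, rfl⟩ ⟨_, rfl⟩
    · rw [sup_le_iff]
      constructor
      · rintro _ ⟨v, rfl⟩
        exact ⟨Sum.elim v 0, by
          simp [Matrix.mulVecLin_apply, Matrix.fromCols_mulVec_sumElim]⟩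
      · rintro _ ⟨v, rfl⟩
        exact ⟨Sum.elim 0 v, by
          simp [Matrix.mulVecLin_apply, Matrix.fromCols_mulVec_sumElim]⟩
  have hsum : (Matrix.fromCols A1 A'').rank
      + Module.finrank F ↥(S1 ⊓ S2) = A1.rank + A''.rank := by
    rw [Matrix.rank, hrange]
    exact Submodule.finrank_sup_add_finrank_inf_eq S1 S2
  have hA''rank : A''.rank ≤ n - Z.card := by
    calc A''.rank ≤ Fintype.card {v : Fin n // v ∉ Z} := A''.rank_le_card_width
    _ = n - Z.card := hcard
  have hinf0 : Module.finrank F ↥(S1 ⊓ S2) = 0 := by omega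
  have hinf : S1 ⊓ S2 = ⊥ := Submodule.finrank_eq_zero.mp hinf0
  -- the matrix M
  set M := (Matrix.of fun i (p : {v // v ∈ P}) => Rmap A fo (fun i' => A i' p.1) i)
    with hMdef
  -- column decomposition of A1 *ᵥ v
  have hA1col : ∀ v : {v // v ∈ P} → F,
      A1 *ᵥ v = ∑ p : {v // v ∈ P}, v p • (fun i => A i p.1) := by
    intro v
    funext i
    rw [Matrix.mulVec, dotProduct, Finset.sum_apply]
    simp [hA1, mul_comm]
  -- linearity of Rmap over sums
  have hRsum : ∀ v : {v // v ∈ P} → F,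
      Rmap A fo (∑ p : {v // v ∈ P}, v p • (fun i => A i p.1))
        = ∑ p : {v // v ∈ P}, v p • Rmap A fo (fun i => A i p.1) := by
    intro v
    have key : ∀ (s : Finset {v // v ∈ P}),
        Rmap A fo (∑ p ∈ s, v p • (fun i => A i p.1))
          = ∑ p ∈ s, v p • Rmap A fo (fun i => A i p.1) := by
      intro s
      induction s using Finset.induction_on with
      | empty => simp [Rmap_zero]
      | insert _ _ hq ih =>
        rename_i q s'
        rw [Finset.sum_insert hq, Finset.sum_insert hq, Rmap_linear, ih]
    exact key Finset.univ
  have hM : ∀ v : {v // v ∈ P} → F, M *ᵥ v = Rmap A fo (A1 *ᵥ v) := by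
    intro v
    rw [hA1col, hRsum]
    funext i
    rw [Matrix.mulVec, dotProduct, Finset.sum_apply]
    simp [hMdef, mul_comm]
  -- A *ᵥ Forcing b lies in S2
  have hforce : ∀ b : Fin n → F, A *ᵥ Forcing A fo b ∈ S2 := by
    intro b
    refine ⟨fun p => Forcing A fo b p.1, ?_⟩
    rw [Matrix.mulVecLin_apply]
    funext i
    rw [Matrix.mulVec, dotProduct, Matrix.mulVec, dotProduct]
    simp only [hA'', Matrix.of_apply]
    calc ∑ p : {v : Fin n // v ∉ Z}, A i p.1 * Forcing A fo b p.1
        = ∑ w ∈ Zᶜ, A i w * Forcing A fo b w :=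
          (Finset.sum_subtype (p := fun v : Fin n => v ∉ Z) Zᶜ
            (fun x => Finset.mem_compl) (fun w => A i w * Forcing A fo b w)).symm
      _ = ∑ w : Fin n, A i w * Forcing A fo b w :=
          Finset.sum_subset (Finset.subset_univ _) (by
            intro w _ hw
            simp only [Finset.mem_compl, not_not] at hw
            rw [Forcing_mem_Z A fo b w hw, mul_zero])
  -- kernels agree
  have hker : LinearMap.ker M.mulVecLin = LinearMap.ker A1.mulVecLin := by
    ext v
    simp only [LinearMap.mem_ker, Matrix.mulVecLin_apply]
    rw [hM]
    constructor
    · intro h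
      have h1 : A1 *ᵥ v = A *ᵥ Forcing A fo (A1 *ᵥ v) := by
        have := sub_eq_zero.mp h
        exact this
      have h2 : A1 *ᵥ v ∈ S1 ⊓ S2 := by
        refine ⟨⟨v, rfl⟩, ?_⟩
        rw [h1]
        exact hforce _
      rw [hinf] at h2
      exact h2
    · intro h
      rw [h, Rmap_zero]
  have h1 := LinearMap.finrank_range_add_finrank_ker M.mulVecLin
  have h2 := LinearMap.finrank_range_add_finrank_ker A1.mulVecLin
  rw [hker] at h1
  show Module.finrank F (LinearMap.range M.mulVecLin)
      = Module.finrank F (LinearMap.range A1.mulVecLin)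
  omega
end
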